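/- Let U be a finite nonempty set, let g : ℝ^d × U → ℝ be twice continuously differentiable in its first argument for each u, let ζ : ℝ^d → ℝ^d be twice continuously differentiable with ζ_i(θ) ≥ 0 for every component i and every θ, define D(θ) = max_{u∈U} g(θ,u) and f(θ) = D(θ)·ζ(θ) ∈ ℝ^d, and let K ⊂ ℝ^d be compact. Then there exists b_T < ∞ such that for every θ ∈ K, every v ∈ ℝ^d with ‖v‖ ≤ 1, and every u* ∈ U with g(θ,u*) = D(θ), the component-wise inequality holds: f(θ + v) ≥ f(θ) + [ ζ(θ) ∇_θ g(θ,u*)ᵀ + D(θ) Dζ(θ) ] v − b_T ‖v‖² 𝟙, where 𝟙 ∈ ℝ^d is the vector of all ones. -/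

import Mathlib

open Filter Topology
open scoped RealInnerProductSpace

open Metric in
lemma taylor_bound {E : Type*} [NormedAddCommGroup E] [NormedSpace ℝ E] [ProperSpace E]
    (h : E → ℝ) (hh : ContDiff ℝ 2 h) (K : Set E) (hK : IsCompact K) :
    ∃ M : ℝ, 0 ≤ M ∧ ∀ θ ∈ K, ∀ v : E, ‖v‖ ≤ 1 →
      |h (θ + v) - h θ - fderiv ℝ h θ v| ≤ M * ‖v‖ ^ 2 := by
  have h1 : ContDiff ℝ 1 (fderiv ℝ h) := hh.fderiv_right (by norm_num)
  have h2cont : Continuous (fderiv ℝ (fderiv ℝ h)) :=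
    (h1.fderiv_right (m := 0) (by norm_num)).continuous
  set C : Set E := cthickening 1 K with hC
  have hCc : IsCompact C := hK.cthickening
  obtain ⟨M, hM⟩ := hCc.exists_bound_of_continuousOn (f := fderiv ℝ (fderiv ℝ h))
    (h2cont.continuousOn (s := C))
  refine ⟨max M 0, le_max_right _ _, ?_⟩
  intro θ hθ v hv
  set s := segment ℝ θ (θ + v) with hs
  have hsb : s ⊆ closedBall θ ‖v‖ := by
    apply (convex_closedBall θ ‖v‖).segment_subset
    · simp
    · simp [dist_eq_norm]
  have hsC : s ⊆ C := by
    intro x hx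
    have := hsb hx
    exact closedBall_subset_cthickening hθ 1 (by
      simp only [mem_closedBall] at this ⊢; linarith [this])
  -- Lipschitz bound on the derivative over the segment
  have lip : ∀ x ∈ s, ‖fderiv ℝ h x - fderiv ℝ h θ‖ ≤ max M 0 * ‖v‖ := by
    intro x hx
    have hθs : θ ∈ s := left_mem_segment ℝ θ (θ + v)
    have := (convex_segment θ (θ + v)).norm_image_sub_le_of_norm_fderiv_le
      (f := fderiv ℝ h) (C := max M 0)
      (fun y _ => h1.differentiable one_ne_zero y)
      (fun y hy => le_trans (hM y (hsC hy)) (le_max_left _ _))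
      hθs hx
    calc ‖fderiv ℝ h x - fderiv ℝ h θ‖ ≤ max M 0 * ‖x - θ‖ := this
      _ ≤ max M 0 * ‖v‖ := by
          have := hsb hx
          simp only [mem_closedBall, dist_eq_norm] at this
          exact mul_le_mul_of_nonneg_left this (le_max_right _ _)
  have key := (convex_segment θ (θ + v)).norm_image_sub_le_of_norm_fderiv_le'
    (f := h) (φ := fderiv ℝ h θ) (C := max M 0 * ‖v‖)
    (fun y _ => hh.differentiable (by norm_num) y)
    lip (left_mem_segment ℝ θ (θ + v)) (right_mem_segment ℝ θ (θ + v))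
  simp only [add_sub_cancel_left] at key
  calc |h (θ + v) - h θ - fderiv ℝ h θ v| ≤ max M 0 * ‖v‖ * ‖v‖ := key
    _ = max M 0 * ‖v‖ ^ 2 := by ring

/-- Let `U` be finite nonempty, `g : ℝ^d × U → ℝ` be `C²` in `θ`,
`ζ : ℝ^d → ℝ^d` be `C²` with nonnegative components, `D θ = max_u g θ u`,
`f θ = D θ • ζ θ`, and `K ⊂ ℝ^d` compact.  Then there is `b_T < ∞` such that for every
`θ ∈ K`, every `v` with `‖v‖ ≤ 1`, and every maximizer `u*` of `g θ ·`, componentwise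
`f (θ+v) ≥ f θ + [ζ θ ∇_θ g(θ,u*)ᵀ + D θ · Dζ(θ)] v − b_T ‖v‖² 𝟙`. -/
theorem stmt_7 (d : ℕ) (U : Type) [Fintype U] [Nonempty U]
    (g : EuclideanSpace ℝ (Fin d) → U → ℝ)
    (hg : ∀ u, ContDiff ℝ 2 (fun θ => g θ u))
    (ζ : EuclideanSpace ℝ (Fin d) → EuclideanSpace ℝ (Fin d))
    (hζ : ContDiff ℝ 2 ζ)
    (hζnonneg : ∀ θ (i : Fin d), 0 ≤ ζ θ i)
    (K : Set (EuclideanSpace ℝ (Fin d))) (hK : IsCompact K) :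
    ∃ bT : ℝ, ∀ θ ∈ K, ∀ v : EuclideanSpace ℝ (Fin d), ‖v‖ ≤ 1 →
      ∀ ustar : U, g θ ustar = (⨆ u, g θ u) →
        ∀ i : Fin d,
          (⨆ u, g (θ + v) u) * ζ (θ + v) i ≥
            (⨆ u, g θ u) * ζ θ i
              + (ζ θ i * ⟪gradient (fun θ' => g θ' ustar) θ, v⟫
                  + (⨆ u, g θ u) * (fderiv ℝ ζ θ v) i)
              - bT * ‖v‖ ^ 2 := by
  have hζi : ∀ i : Fin d, ContDiff ℝ 2 (fun x => ζ x i) := fun i =>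
    (EuclideanSpace.proj (𝕜 := ℝ) i).contDiff.comp hζ
  have hcd : ∀ (u : U) (i : Fin d), ContDiff ℝ 2 (fun x => g x u * ζ x i) := fun u i =>
    (hg u).mul (hζi i)
  have hT := fun (u : U) (i : Fin d) => taylor_bound _ (hcd u i) K hK
  choose M hM0 hM using hT
  refine ⟨∑ u : U, ∑ i : Fin d, M u i, ?_⟩
  have hle : ∀ u i, M u i ≤ ∑ u : U, ∑ i : Fin d, M u i := by
    intro u i
    calc M u i ≤ ∑ j, M u j :=
          Finset.single_le_sum (fun j _ => hM0 u j) (Finset.mem_univ i)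
      _ ≤ ∑ u', ∑ j, M u' j :=
          Finset.single_le_sum
            (fun u' _ => Finset.sum_nonneg fun j _ => hM0 u' j) (Finset.mem_univ u)
  intro θ hθ v hv ustar hmax i
  have hbdd : BddAbove (Set.range (g (θ + v))) := (Set.finite_range _).bddAbove
  have h1 : g (θ + v) ustar ≤ ⨆ u, g (θ + v) u := le_ciSup hbdd ustar
  have step1 : g (θ + v) ustar * ζ (θ + v) i ≤ (⨆ u, g (θ + v) u) * ζ (θ + v) i :=
    mul_le_mul_of_nonneg_right h1 (hζnonneg _ i)
  have taylor := (abs_le.1 (hM ustar i θ hθ v hv)).1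
  have hgd : DifferentiableAt ℝ (fun x => g x ustar) θ :=
    (hg ustar).differentiable (by norm_num) θ
  have hζd : DifferentiableAt ℝ ζ θ := hζ.differentiable (by norm_num) θ
  have hζid : DifferentiableAt ℝ (fun x => ζ x i) θ :=
    ((hζi i).differentiable (by norm_num)) θ
  have hproj : fderiv ℝ (fun x => ζ x i) θ
      = (EuclideanSpace.proj (𝕜 := ℝ) i).comp (fderiv ℝ ζ θ) :=
    ((EuclideanSpace.proj (𝕜 := ℝ) i).hasFDerivAt.comp θ hζd.hasFDerivAt).fderiv
  have hmul : fderiv ℝ (fun x => g x ustar * ζ x i) θ v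
      = g θ ustar * (fderiv ℝ ζ θ v) i
        + ζ θ i * (fderiv ℝ (fun x => g x ustar) θ v) := by
    rw [fderiv_fun_mul hgd hζid]
    simp [hproj, ContinuousLinearMap.add_apply, ContinuousLinearMap.smul_apply,
      ContinuousLinearMap.comp_apply, smul_eq_mul]
  have hgrad : ⟪gradient (fun θ' => g θ' ustar) θ, v⟫
      = fderiv ℝ (fun θ' => g θ' ustar) θ v := by
    rw [gradient]
    exact InnerProductSpace.toDual_symm_apply
  have hbM : M ustar i * ‖v‖ ^ 2 ≤ (∑ u : U, ∑ i : Fin d, M u i) * ‖v‖ ^ 2 :=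
    mul_le_mul_of_nonneg_right (hle ustar i) (sq_nonneg _)
  rw [ge_iff_le, hgrad, ← hmax]
  linarith [step1, taylor, hmul, hbM]
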